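/- For all real a > 0 and b > 0, ∫_0^∞ e^{−a t} · J_{1/2}(b t) · t^{−1/2} dt = √(2/(π b)) · arcsin( b/√(b² + a²) ), where J_{1/2}(y) = ∑_{m=0}^∞ (−1)^m/(m!·Γ(m+3/2))·(y/2)^{2m+1/2}. -/

import Mathlib

open Real MeasureTheory

lemma gamma_half_formula (m : ℕ) :
    Real.Gamma (m + 3/2) = (2*m+1).factorial * Real.sqrt π / (4^m * m.factorial * 2) := by
  induction m with
  | zero =>
    have h : ((0:ℕ):ℝ) + 3/2 = 1/2 + 1 := by norm_num
    rw [h, Real.Gamma_add_one (by norm_num), Real.Gamma_one_half_eq]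
    norm_num
    ring
  | succ n ih =>
    have h1 : ((n+1:ℕ):ℝ) + 3/2 = ((n:ℝ) + 3/2) + 1 := by push_cast; ring
    rw [h1, Real.Gamma_add_one (by positivity), ih]
    have h2 : (((2*(n+1)+1).factorial : ℕ) : ℝ)
        = (2*(n:ℝ)+3) * ((2*(n:ℝ)+2) * (2*n+1).factorial) := by
      have : 2*(n+1)+1 = (2*n+1) + 1 + 1 := by ring
      rw [this, Nat.factorial_succ, Nat.factorial_succ]
      push_cast; ring
    have h3 : (((n+1).factorial : ℕ) : ℝ) = ((n:ℝ)+1) * n.factorial := by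
      rw [Nat.factorial_succ]; push_cast; ring
    rw [h2, h3]
    have h4 : (0:ℝ) < 4^n := by positivity
    have hf : (0:ℝ) < n.factorial := by exact_mod_cast n.factorial_pos
    have h5 : ((4:ℝ))^(n+1) = 4 * 4^n := by ring
    rw [h5]
    field_simp
    ring

/-- The Bessel function of the first kind of order 1/2, defined by its series. -/
noncomputable def besselJhalf (y : ℝ) : ℝ :=
  ∑' m : ℕ, (-1) ^ m / (m.factorial * Real.Gamma (m + 3/2)) *
    (y / 2) ^ (2 * (m : ℝ) + 1/2)

lemma besselJhalf_eq {y : ℝ} (hy : 0 < y) :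
    besselJhalf y = Real.sqrt (2 / (π * y)) * Real.sin y := by
  rw [besselJhalf, Real.sin_eq_tsum, ← tsum_mul_left]
  congr 1
  funext m
  have hy2 : (0:ℝ) < y/2 := by linarith
  have hrp : (y/2) ^ (2 * (m : ℝ) + 1/2) = (y/2)^(2*m) * Real.sqrt (y/2) := by
    rw [Real.rpow_add hy2]
    congr 1
    · rw [show (2 * (m:ℝ)) = ((2*m : ℕ) : ℝ) by push_cast; ring, Real.rpow_natCast]
    · rw [Real.sqrt_eq_rpow]
  rw [hrp, gamma_half_formula]
  have h4 : (0:ℝ) < 4^m := by positivity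
  have hf : (0:ℝ) < m.factorial := by exact_mod_cast m.factorial_pos
  have hf2 : (0:ℝ) < (2*m+1).factorial := by exact_mod_cast (2*m+1).factorial_pos
  have hsp : (0:ℝ) < Real.sqrt π := Real.sqrt_pos.2 pi_pos
  have hsy : (0:ℝ) < Real.sqrt y := Real.sqrt_pos.2 hy
  have h2 : Real.sqrt (y/2) = Real.sqrt y / Real.sqrt 2 := Real.sqrt_div hy.le 2
  have h3 : Real.sqrt (2/(π*y)) = Real.sqrt 2 / (Real.sqrt π * Real.sqrt y) := by
    rw [Real.sqrt_div (by norm_num), Real.sqrt_mul pi_pos.le]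
  have h5 : (y/2)^(2*m) = y^(2*m) / 4^m := by
    rw [div_pow]; congr 1; rw [pow_mul]; norm_num
  have hs2 : Real.sqrt 2 * Real.sqrt 2 = 2 := Real.mul_self_sqrt (by norm_num)
  have hsy2 : Real.sqrt y * Real.sqrt y = y := Real.mul_self_sqrt hy.le
  rw [h2, h3, h5]
  have hy' : y ≠ 0 := hy.ne'
  have hs2' : Real.sqrt 2 ≠ 0 := by positivity
  field_simp
  ring_nf
  rw [Real.sq_sqrt hy.le, Real.sq_sqrt (by norm_num : (0:ℝ) ≤ 2)]
  ring

open Set Filter Topology in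
lemma integral_exp_Ioi {c : ℝ} (hc : 0 < c) (x0 : ℝ) :
    ∫ x in Set.Ioi x0, Real.exp (-c*x) = Real.exp (-c*x0) / c := by
  have hd : ∀ x ∈ Set.Ioi x0, HasDerivAt (fun x => -(Real.exp (-c*x))/c) (Real.exp (-c*x)) x := by
    intro x _
    have h := (((hasDerivAt_id x).const_mul (-c)).exp.neg).div_const c
    refine h.congr_deriv ?_
    simp only [id]
    field_simp
  have hint : IntegrableOn (fun x => Real.exp (-c*x)) (Set.Ioi x0) :=
    exp_neg_integrableOn_Ioi x0 hc
  have htend : Tendsto (fun x => -(Real.exp (-c*x))/c) atTop (𝓝 0) := by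
    have h1 : Tendsto (fun x : ℝ => c*x) atTop atTop :=
      Tendsto.const_mul_atTop hc tendsto_id
    have h2 : Tendsto (fun x : ℝ => Real.exp (-(c*x))) atTop (𝓝 0) :=
      Real.tendsto_exp_neg_atTop_nhds_zero.comp h1
    have := (h2.neg.div_const c)
    simpa [neg_mul] using this
  have hc0 : ContinuousWithinAt (fun x => -(Real.exp (-c*x))/c) (Set.Ici x0) x0 :=
    (Continuous.continuousWithinAt (by continuity))
  have := MeasureTheory.integral_Ioi_of_hasDerivAt_of_tendsto hc0 hd hint htend
  rw [this]
  field_simp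
  ring

open Set Filter Topology in
lemma laplace_sin {s b : ℝ} (hs : 0 < s) (hb : 0 < b) :
    ∫ t in Set.Ioi (0:ℝ), Real.sin (b*t) * Real.exp (-s*t) = b/(s^2+b^2) := by
  have hsb : (0:ℝ) < s^2+b^2 := by positivity
  set f : ℝ → ℝ := fun t => -(Real.exp (-s*t)*(s*Real.sin (b*t)+b*Real.cos (b*t)))/(s^2+b^2)
    with hf
  have hd : ∀ t ∈ Set.Ioi (0:ℝ), HasDerivAt f (Real.sin (b*t) * Real.exp (-s*t)) t := by
    intro t _
    have hexp : HasDerivAt (fun t : ℝ => Real.exp (-s*t)) (Real.exp (-s*t) * (-s)) t :=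
      ((hasDerivAt_id t).const_mul (-s)).exp.congr_deriv (by simp)
    have hsin : HasDerivAt (fun t : ℝ => Real.sin (b*t)) (Real.cos (b*t) * b) t :=
      ((hasDerivAt_id t).const_mul b).sin.congr_deriv (by simp [mul_comm])
    have hcos : HasDerivAt (fun t : ℝ => Real.cos (b*t)) (-Real.sin (b*t) * b) t :=
      ((hasDerivAt_id t).const_mul b).cos.congr_deriv (by simp [mul_comm])
    have h := ((hexp.mul ((hsin.const_mul s).add (hcos.const_mul b))).neg).div_const (s^2+b^2)
    refine h.congr_deriv ?_
    simp only [Pi.add_apply]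
    field_simp
    ring
  have hint : IntegrableOn (fun t => Real.sin (b*t) * Real.exp (-s*t)) (Set.Ioi (0:ℝ)) := by
    apply (exp_neg_integrableOn_Ioi 0 hs).mono' ((Continuous.mul (by fun_prop) (by fun_prop)).aestronglyMeasurable)
    filter_upwards with t
    simp only [Pi.mul_apply]
    rw [norm_mul, Real.norm_eq_abs, Real.norm_eq_abs, Real.abs_exp]
    exact mul_le_of_le_one_left (Real.exp_nonneg _) (abs_sin_le_one _)
  have htend : Tendsto f atTop (𝓝 0) := by
    apply squeeze_zero_norm (a := fun t => (s+b)/(s^2+b^2) * Real.exp (-s*t))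
    · intro t
      rw [hf]
      rw [norm_div, Real.norm_eq_abs, Real.norm_eq_abs, abs_neg, abs_of_pos hsb, abs_mul,
        Real.abs_exp]
      rw [div_le_iff₀ hsb, mul_comm ((s+b)/(s^2+b^2)) _, mul_assoc, div_mul_cancel₀ _ hsb.ne']
      have h1 : |s*Real.sin (b*t)+b*Real.cos (b*t)| ≤ s + b := by
        calc |s*Real.sin (b*t)+b*Real.cos (b*t)| ≤ |s*Real.sin (b*t)| + |b*Real.cos (b*t)| :=
              abs_add_le _ _
        _ ≤ s + b := by
            rw [abs_mul, abs_mul, abs_of_pos hs, abs_of_pos hb]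
            have := abs_sin_le_one (b*t); have := abs_cos_le_one (b*t)
            nlinarith
      have := Real.exp_nonneg (-s*t)
      nlinarith
    · have h1 : Tendsto (fun t : ℝ => s*t) atTop atTop := Tendsto.const_mul_atTop hs tendsto_id
      have h2 : Tendsto (fun t : ℝ => Real.exp (-(s*t))) atTop (𝓝 0) :=
        Real.tendsto_exp_neg_atTop_nhds_zero.comp h1
      simpa [neg_mul] using (h2.const_mul ((s+b)/(s^2+b^2))).congr (fun t => by ring_nf)
  have hc0 : ContinuousWithinAt f (Set.Ici (0:ℝ)) 0 := Continuous.continuousWithinAt (by fun_prop)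
  have := MeasureTheory.integral_Ioi_of_hasDerivAt_of_tendsto hc0 hd hint htend
  rw [this, hf]
  norm_num
  ring

open Set Filter Topology in
lemma integral_inv_sq_add {a b : ℝ} (ha : 0 < a) (hb : 0 < b) :
    ∫ s in Set.Ioi a, b/(s^2+b^2) = Real.arctan (b/a) := by
  have hcont : Continuous fun s : ℝ => b/(s^2+b^2) :=
    continuous_const.div (by fun_prop) (fun s => by positivity)
  have hd : ∀ s ∈ Set.Ioi a, HasDerivAt (fun s => Real.arctan (s/b)) (b/(s^2+b^2)) s := by
    intro s _
    have h := ((hasDerivAt_id s).div_const b).arctan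
    refine h.congr_deriv ?_
    simp only [id]
    field_simp
    ring
  have hint : IntegrableOn (fun s => b/(s^2+b^2)) (Set.Ioi a) := by
    have hi := (integrableOn_Ioi_rpow_of_lt (by norm_num : (-2:ℝ) < -1) ha).const_mul b
    apply hi.mono' hcont.aestronglyMeasurable
    filter_upwards [ae_restrict_mem measurableSet_Ioi] with s hsmem
    have hs : 0 < s := ha.trans hsmem
    have hr : s^(-2:ℝ) = (s^2)⁻¹ := by
      rw [Real.rpow_neg hs.le, show ((2:ℝ)) = ((2:ℕ):ℝ) by norm_num, Real.rpow_natCast]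
    rw [Real.norm_eq_abs, hr, abs_of_pos (by positivity),
      show b*(s^2)⁻¹ = b/s^2 by ring]
    gcongr
    nlinarith [sq_nonneg b]
  have htend : Tendsto (fun s => Real.arctan (s/b)) atTop (𝓝 (π/2)) := by
    have h1 : Tendsto (fun s : ℝ => s/b) atTop atTop := tendsto_id.atTop_div_const hb
    exact (tendsto_nhds_of_tendsto_nhdsWithin tendsto_arctan_atTop).comp h1
  have hc0 : ContinuousWithinAt (fun s => Real.arctan (s/b)) (Set.Ici a) a :=
    Continuous.continuousWithinAt (Real.continuous_arctan.comp (continuous_id.div_const b))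
  rw [MeasureTheory.integral_Ioi_of_hasDerivAt_of_tendsto hc0 hd hint htend]
  have := Real.arctan_inv_of_pos (div_pos ha hb)
  rw [inv_div] at this
  rw [this]

open Set Filter Topology in
lemma dirichlet_laplace {a b : ℝ} (ha : 0 < a) (hb : 0 < b) :
    ∫ t in Set.Ioi (0:ℝ), Real.exp (-a*t) * (Real.sin (b*t)/t) = Real.arctan (b/a) := by
  set μ := volume.restrict (Set.Ioi (0:ℝ)) with hμ
  set ν := volume.restrict (Set.Ioi a) with hν
  set f : ℝ → ℝ → ℝ := fun t s => Real.sin (b*t) * Real.exp (-s*t) with hfdef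
  have hmeas : AEStronglyMeasurable (Function.uncurry f) (μ.prod ν) := by
    apply Continuous.aestronglyMeasurable
    exact (Real.continuous_sin.comp (continuous_const.mul continuous_fst)).mul
      (Real.continuous_exp.comp ((continuous_snd.neg).mul continuous_fst))
  have hinner : ∀ t ∈ Set.Ioi (0:ℝ),
      ∫ s in Set.Ioi a, f t s = Real.exp (-a*t) * (Real.sin (b*t)/t) := by
    intro t ht
    have h1 : (fun s => f t s) = fun s => Real.sin (b*t) * Real.exp (-t*s) := by
      funext s; rw [hfdef]; simp only; rw [show -s*t = -t*s by ring]
    rw [h1, MeasureTheory.integral_const_mul, integral_exp_Ioi ht a, show -t*a = -a*t by ring]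
    ring
  have hintf : MeasureTheory.Integrable (Function.uncurry f) (μ.prod ν) := by
    rw [MeasureTheory.integrable_prod_iff hmeas]
    constructor
    · filter_upwards [ae_restrict_mem measurableSet_Ioi] with t ht
      have h2 : Integrable (fun s => Real.sin (b*t) * Real.exp (-t*s)) ν :=
        (exp_neg_integrableOn_Ioi a ht).const_mul _
      apply h2.congr
      filter_upwards with s
      simp only [Function.uncurry, hfdef]
      rw [show -t*s = -s*t by ring]
    · have heq : (fun t => ∫ s, ‖f t s‖ ∂ν)
          =ᵐ[μ] (fun t => |Real.sin (b*t)| * (Real.exp (-a*t)/t)) := by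
        filter_upwards [ae_restrict_mem measurableSet_Ioi] with t ht
        have h3 : (fun s => ‖f t s‖) = fun s => |Real.sin (b*t)| * Real.exp (-t*s) := by
          funext s; rw [hfdef]
          simp only [Real.norm_eq_abs, abs_mul, Real.abs_exp]
          rw [show -s*t = -t*s by ring]
        simp only [h3]
        rw [MeasureTheory.integral_const_mul, hν, integral_exp_Ioi ht a, show -t*a = -a*t by ring]
      have hF : Integrable (fun t => |Real.sin (b*t)| * (Real.exp (-a*t)/t)) μ := by
        apply ((exp_neg_integrableOn_Ioi 0 ha).const_mul b).mono'
        · apply AEStronglyMeasurable.mul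
          · exact (continuous_abs.comp (Real.continuous_sin.comp
              (continuous_const.mul continuous_id))).aestronglyMeasurable
          · exact ((Real.measurable_exp.comp (measurable_const.mul measurable_id)).div
              measurable_id).aestronglyMeasurable
        · filter_upwards [ae_restrict_mem measurableSet_Ioi] with t ht
          have ht' : (0:ℝ) < t := ht
          rw [Real.norm_eq_abs, abs_mul, abs_abs, abs_div, Real.abs_exp, abs_of_pos ht']
          have h1 : |Real.sin (b*t)| ≤ b*t := by
            have h := Real.abs_sin_le_abs (x := b*t)
            rwa [abs_of_pos (show (0:ℝ) < b*t from mul_pos hb ht')] at h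
          calc |Real.sin (b*t)| * (Real.exp (-a*t)/t)
              ≤ (b*t) * (Real.exp (-a*t)/t) :=
                mul_le_mul_of_nonneg_right h1 (by positivity)
            _ = b * Real.exp (-a*t) := by field_simp
      exact hF.congr heq.symm
  have hswap := MeasureTheory.integral_integral_swap hintf
  calc ∫ t in Set.Ioi (0:ℝ), Real.exp (-a*t) * (Real.sin (b*t)/t)
      = ∫ t in Set.Ioi (0:ℝ), ∫ s in Set.Ioi a, f t s :=
        (setIntegral_congr_fun measurableSet_Ioi (fun t ht => hinner t ht)).symm
    _ = ∫ s in Set.Ioi a, ∫ t in Set.Ioi (0:ℝ), f t s := hswap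
    _ = ∫ s in Set.Ioi a, b/(s^2+b^2) :=
        setIntegral_congr_fun measurableSet_Ioi (fun s hs => laplace_sin (ha.trans hs) hb)
    _ = Real.arctan (b/a) := integral_inv_sq_add ha hb

theorem laplace_besselJhalf (a b : ℝ) (ha : 0 < a) (hb : 0 < b) :
    ∫ t in Set.Ioi (0:ℝ), Real.exp (-a * t) * besselJhalf (b * t) * t ^ (-(1/2) : ℝ)
      = Real.sqrt (2 / (π * b)) * Real.arcsin (b / Real.sqrt (b ^ 2 + a ^ 2)) := by
  have hpt : Set.EqOn
      (fun t => Real.exp (-a * t) * besselJhalf (b * t) * t ^ (-(1/2) : ℝ))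
      (fun t => Real.sqrt (2/(π*b)) * (Real.exp (-a*t) * (Real.sin (b*t)/t)))
      (Set.Ioi (0:ℝ)) := by
    intro t ht
    have ht' : (0:ℝ) < t := ht
    simp only
    rw [besselJhalf_eq (mul_pos hb ht')]
    have h1 : 2/(π*(b*t)) = (2/(π*b)) * t⁻¹ := by field_simp
    have h2 : Real.sqrt (2/(π*(b*t))) = Real.sqrt (2/(π*b)) * (Real.sqrt t)⁻¹ := by
      rw [h1, Real.sqrt_mul (by positivity), Real.sqrt_inv]
    have h3 : t ^ (-(1/2) : ℝ) = (Real.sqrt t)⁻¹ := by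
      rw [Real.rpow_neg ht'.le, ← Real.sqrt_eq_rpow]
    rw [h2, h3]
    have h4 : (Real.sqrt t)⁻¹ * (Real.sqrt t)⁻¹ = t⁻¹ := by
      rw [← mul_inv, Real.mul_self_sqrt ht'.le]
    field_simp
    ring_nf
    rw [Real.sq_sqrt ht'.le]
    ring
  rw [setIntegral_congr_fun measurableSet_Ioi hpt, MeasureTheory.integral_const_mul,
    dirichlet_laplace ha hb]
  congr 1
  rw [Real.arctan_eq_arcsin]
  congr 1
  have h1 : 1+(b/a)^2 = (b^2+a^2)/a^2 := by field_simp; ring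
  rw [h1, Real.sqrt_div (by positivity) _, Real.sqrt_sq ha.le]
  have hs : (0:ℝ) < Real.sqrt (b^2+a^2) := Real.sqrt_pos.2 (by positivity)
  field_simp
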